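/- For every n ≥ 1 there is a k-module isomorphism H₁((A,B,ε);M) ≅ H₁((Mₙ(A),B,ε_*);Mₙ(M)), where ε_* : B → Mₙ(A) sends α to the scalar matrix ε(α)·Iₙ and Mₙ(M) is the Mₙ(A)-bimodule of n×n matrices with entries in M (under matrix multiplication), which is B-symmetric with respect to ε_*. -/

import Mathlib

/-!
STATEMENT 5: For every n ≥ 1 there is a k-module isomorphism
  H₁((A,B,ε);M) ≅ H₁((Mₙ(A),B,ε_*);Mₙ(M)),
where ε_* : B → Mₙ(A) sends α to the scalar matrix ε(α)·Iₙ and Mₙ(M) is the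
Mₙ(A)-bimodule of n×n matrices with entries in M (under matrix multiplication),
which is B-symmetric with respect to ε_*.

Here (A,B,ε) is a triple over a commutative ring k and M is an A-bimodule on which k
acts centrally and which is B-symmetric.  H₁ = ker ∂₁ / im ∂₂ on both sides; the
differentials are quantified universally, characterized on pure tensors, with the
matrix bimodule structure of Mₙ(M) (matrix multiplication on either side) built into
the characterizations.  The conclusion also records that Mₙ(M) is B-symmetric with
respect to ε_*.
-/

open TensorProduct MulOpposite

set_option maxSynthPendingDepth 8

open Matrix

set_option linter.unusedSectionVars false
set_option maxSynthPendingDepth 8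
namespace SH5
section general
variable (k : Type*) [CommRing k] {n : ℕ} (V : Type*) [AddCommGroup V] [Module k V]
def entryL (p q : Fin n) : Matrix (Fin n) (Fin n) V →ₗ[k] V where
  toFun N := N p q
  map_add' _ _ := rfl
  map_smul' _ _ := rfl
def stdL (p q : Fin n) : V →ₗ[k] Matrix (Fin n) (Fin n) V where
  toFun v := Matrix.single p q v
  map_add' x y := by
    ext i j
    simp only [Matrix.single, Matrix.of_apply, Matrix.add_apply]
    split <;> simp
  map_smul' c x := by
    ext i j
    simp only [Matrix.single, Matrix.of_apply, Matrix.smul_apply, RingHom.id_apply]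
    split <;> simp
def traceL : Matrix (Fin n) (Fin n) V →ₗ[k] V where
  toFun N := ∑ i, N i i
  map_add' x y := by simp [Finset.sum_add_distrib]
  map_smul' c x := by simp [Finset.smul_sum]
@[simp] lemma entryL_apply (p q : Fin n) (N : Matrix (Fin n) (Fin n) V) :
    entryL k V p q N = N p q := rfl
@[simp] lemma stdL_apply (p q : Fin n) (v : V) :
    stdL k V p q v = Matrix.single p q v := rfl
@[simp] lemma traceL_apply (N : Matrix (Fin n) (Fin n) V) :
    traceL k V N = ∑ i, N i i := rfl
def colL (i0 j : Fin n) : Matrix (Fin n) (Fin n) V →ₗ[k] Matrix (Fin n) (Fin n) V where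
  toFun N := Matrix.of fun i m => if m = i0 then N i j else 0
  map_add' x y := by
    ext i m
    simp only [Matrix.of_apply, Matrix.add_apply]
    split <;> simp
  map_smul' c x := by
    ext i m
    simp only [Matrix.of_apply, Matrix.smul_apply, RingHom.id_apply]
    split <;> simp
@[simp] lemma colL_apply (i0 j : Fin n) (N : Matrix (Fin n) (Fin n) V) (i m : Fin n) :
    colL k V i0 j N i m = if m = i0 then N i j else 0 := rfl
end general

section main
variable (k : Type*) [CommRing k]
    (A : Type*) [Ring A] [Algebra k A]
    (B : Type*) [CommRing B] [Algebra k B]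
    (M : Type*) [AddCommGroup M] [Module k M]
    [Module A M] [Module Aᵐᵒᵖ M] [SMulCommClass A Aᵐᵒᵖ M]
    [IsScalarTower k A M] [IsScalarTower k Aᵐᵒᵖ M]
    {n : ℕ} (i0 : Fin n)

local notation "MM" => Matrix (Fin n) (Fin n) M
local notation "MA" => Matrix (Fin n) (Fin n) A

noncomputable def iota1 : M ⊗[k] A →ₗ[k] MM ⊗[k] MA :=
  TensorProduct.map (stdL k M i0 i0) (stdL k A i0 i0)

noncomputable def tau1 : MM ⊗[k] MA →ₗ[k] M ⊗[k] A :=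
  ∑ p, ∑ q, TensorProduct.map (entryL k M p q) (entryL k A q p)

noncomputable def iota2 : M ⊗[k] A ⊗[k] A ⊗[k] B →ₗ[k] MM ⊗[k] MA ⊗[k] MA ⊗[k] B :=
  TensorProduct.map (TensorProduct.map (TensorProduct.map (stdL k M i0 i0)
    (stdL k A i0 i0)) (stdL k A i0 i0)) LinearMap.id

noncomputable def tau2 : MM ⊗[k] MA ⊗[k] MA ⊗[k] B →ₗ[k] M ⊗[k] A ⊗[k] A ⊗[k] B :=
  ∑ p, ∑ q, ∑ r, TensorProduct.map (TensorProduct.map (TensorProduct.map (entryL k M p q)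
    (entryL k A q r)) (entryL k A r p)) LinearMap.id

@[simp] lemma iota1_tmul (m : M) (a : A) :
    iota1 k A M i0 (m ⊗ₜ[k] a) = Matrix.single i0 i0 m ⊗ₜ[k] Matrix.single i0 i0 a := rfl

@[simp] lemma tau1_tmul (N : MM) (X : MA) :
    tau1 k A M (N ⊗ₜ[k] X) = ∑ p, ∑ q, (N p q) ⊗ₜ[k] (X q p) := by
  simp [tau1, LinearMap.sum_apply]

lemma tau1_iota1 : (tau1 k A M).comp (iota1 k A M i0) = LinearMap.id := by
  apply TensorProduct.ext'
  intro m a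
  simp only [LinearMap.comp_apply, iota1_tmul, tau1_tmul, LinearMap.id_apply]
  rw [Finset.sum_eq_single i0]
  · rw [Finset.sum_eq_single i0]
    · simp [Matrix.single]
    · intro q _ hq
      have h' : i0 ≠ q := fun h => hq h.symm
      simp [Matrix.single, h']
    · simp
  · intro p _ hp
    apply Finset.sum_eq_zero
    intro q _
    simp [Matrix.single, hp, Ne.symm hp]
  · simp

end main
end SH5

namespace SH5
section main2
variable (k : Type*) [CommRing k]
    (A : Type*) [Ring A] [Algebra k A]
    (B : Type*) [CommRing B] [Algebra k B]
    (M : Type*) [AddCommGroup M] [Module k M]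
    [Module A M] [Module Aᵐᵒᵖ M] [SMulCommClass A Aᵐᵒᵖ M]
    [IsScalarTower k A M] [IsScalarTower k Aᵐᵒᵖ M]
    {n : ℕ} (i0 : Fin n)

local notation "MM" => Matrix (Fin n) (Fin n) M
local notation "MA" => Matrix (Fin n) (Fin n) A

lemma q1_iota1 (p1 : M ⊗[k] A →ₗ[k] M)
    (hp1 : ∀ (m : M) (a : A), p1 (m ⊗ₜ[k] a) = op a • m - a • m)
    (q1 : MM ⊗[k] MA →ₗ[k] MM)
    (hq1 : ∀ (N : MM) (X : MA),
      q1 (N ⊗ₜ[k] X) =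
        (Matrix.of fun i j => ∑ l, op (X l j) • N i l)
        - Matrix.of fun i j => ∑ l, X i l • N l j) :
    q1.comp (iota1 k A M i0) = (stdL k M i0 i0).comp p1 := by
  apply TensorProduct.ext'
  intro m a
  simp only [LinearMap.comp_apply, iota1_tmul, hq1, hp1, stdL_apply]
  ext i j
  simp only [Matrix.sub_apply, Matrix.of_apply]
  rw [Finset.sum_eq_single i0, Finset.sum_eq_single i0]
  · simp only [Matrix.single, Matrix.of_apply]
    by_cases hi : i0 = i <;> by_cases hj : i0 = j <;>
      simp [hi, hj] <;> split_ifs <;> simp_all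
  · intro l _ hl
    have h' : ¬(i0 = i ∧ i0 = l) := fun h => hl h.2.symm
    simp [Matrix.single, h']
  · simp
  · intro l _ hl
    have h' : ¬(i0 = l ∧ i0 = j) := fun h => hl h.1.symm
    simp [Matrix.single, h']
  · simp

lemma p1_tau1 (p1 : M ⊗[k] A →ₗ[k] M)
    (hp1 : ∀ (m : M) (a : A), p1 (m ⊗ₜ[k] a) = op a • m - a • m)
    (q1 : MM ⊗[k] MA →ₗ[k] MM)
    (hq1 : ∀ (N : MM) (X : MA),
      q1 (N ⊗ₜ[k] X) =
        (Matrix.of fun i j => ∑ l, op (X l j) • N i l)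
        - Matrix.of fun i j => ∑ l, X i l • N l j) :
    p1.comp (tau1 k A M) = (traceL k M).comp q1 := by
  apply TensorProduct.ext'
  intro N X
  simp only [LinearMap.comp_apply, tau1_tmul, map_sum, hp1, hq1, traceL_apply,
    Matrix.sub_apply, Matrix.of_apply, Finset.sum_sub_distrib]
  congr 1
  rw [Finset.sum_comm]

end main2
end SH5

namespace SH5
section main3
variable (k : Type*) [CommRing k]
    (A : Type*) [Ring A] [Algebra k A]
    (B : Type*) [CommRing B] [Algebra k B]
    (M : Type*) [AddCommGroup M] [Module k M]
    [Module A M] [Module Aᵐᵒᵖ M] [SMulCommClass A Aᵐᵒᵖ M]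
    [IsScalarTower k A M] [IsScalarTower k Aᵐᵒᵖ M]
    {n : ℕ} (i0 : Fin n)

local notation "MM" => Matrix (Fin n) (Fin n) M
local notation "MA" => Matrix (Fin n) (Fin n) A

lemma std_mul_scalar (p q : Fin n) (a c : A) :
    Matrix.single p q a * Matrix.scalar (Fin n) c = Matrix.single p q (a * c) := by
  have h : Matrix.scalar (Fin n) c = Matrix.diagonal (fun _ => c) := rfl
  ext i j
  rw [h, Matrix.mul_diagonal]
  simp only [Matrix.single, Matrix.of_apply]
  split <;> simp

lemma sum_op_smul_std_std (m : M) (c : A) :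
    (Matrix.of fun i j => ∑ l, op ((Matrix.single i0 i0 c : MA) l j)
        • (Matrix.single i0 i0 m : MM) i l)
      = Matrix.single i0 i0 (op c • m) := by
  ext i j
  simp only [Matrix.of_apply]
  rw [Finset.sum_eq_single i0]
  · simp only [Matrix.single, Matrix.of_apply]
    by_cases hi : i0 = i <;> by_cases hj : i0 = j <;>
      simp [hi, hj] <;> split_ifs <;> simp_all
  · intro l _ hl
    have h' : ¬(i0 = i ∧ i0 = l) := fun h => hl h.2.symm
    simp [Matrix.single, h']
  · simp

lemma sum_std_smul_std (m : M) (c : A) :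
    (Matrix.of fun i j => ∑ l, ((Matrix.single i0 i0 c : MA) i l)
        • (Matrix.single i0 i0 m : MM) l j)
      = Matrix.single i0 i0 (c • m) := by
  ext i j
  simp only [Matrix.of_apply]
  rw [Finset.sum_eq_single i0]
  · simp only [Matrix.single, Matrix.of_apply]
    by_cases hi : i0 = i <;> by_cases hj : i0 = j <;>
      simp [hi, hj] <;> split_ifs <;> simp_all
  · intro l _ hl
    have h' : ¬(i0 = l ∧ i0 = j) := fun h => hl h.1.symm
    simp [Matrix.single, h']
  · simp

@[simp] lemma iota2_tmul (m : M) (a b : A) (α : B) :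
    iota2 k A B M i0 (m ⊗ₜ[k] a ⊗ₜ[k] b ⊗ₜ[k] α) =
      (Matrix.single i0 i0 m) ⊗ₜ[k] (Matrix.single i0 i0 a)
        ⊗ₜ[k] (Matrix.single i0 i0 b) ⊗ₜ[k] α := rfl

lemma q2_iota2 (ε : B →ₐ[k] A)
    (p2 : M ⊗[k] A ⊗[k] A ⊗[k] B →ₗ[k] M ⊗[k] A)
    (hp2 : ∀ (m : M) (a b : A) (α : B),
      p2 (m ⊗ₜ[k] a ⊗ₜ[k] b ⊗ₜ[k] α) =
        (op (a * ε α) • m) ⊗ₜ[k] b - m ⊗ₜ[k] (a * ε α * b) + ((b * ε α) • m) ⊗ₜ[k] a)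
    (q2 : MM ⊗[k] MA ⊗[k] MA ⊗[k] B →ₗ[k] MM ⊗[k] MA)
    (hq2 : ∀ (N : MM) (X Y : MA) (α : B),
      q2 (N ⊗ₜ[k] X ⊗ₜ[k] Y ⊗ₜ[k] α) =
        (Matrix.of fun i j =>
            ∑ l, op ((X * Matrix.scalar (Fin n) (ε α)) l j) • N i l) ⊗ₜ[k] Y
        - N ⊗ₜ[k] (X * Matrix.scalar (Fin n) (ε α) * Y)
        + (Matrix.of fun i j =>
            ∑ l, (Y * Matrix.scalar (Fin n) (ε α)) i l • N l j) ⊗ₜ[k] X) :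
    q2.comp (iota2 k A B M i0) = (iota1 k A M i0).comp p2 := by
  ext m a b α
  simp only [TensorProduct.AlgebraTensorModule.curry_apply, TensorProduct.curry_apply,
    LinearMap.coe_restrictScalars, LinearMap.comp_apply,
    iota2_tmul, hq2, hp2, map_sub, map_add, iota1_tmul]
  rw [std_mul_scalar, std_mul_scalar, sum_op_smul_std_std, sum_std_smul_std,
    Matrix.single_mul_single_same]

end main3
end SH5

namespace SH5

lemma sum3_swap23 {n : ℕ} {β : Type*} [AddCommMonoid β] (f : Fin n → Fin n → Fin n → β) :
    ∑ p, ∑ q, ∑ r, f p q r = ∑ p, ∑ q, ∑ r, f p r q :=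
  Finset.sum_congr rfl fun _ _ => Finset.sum_comm

lemma sum3_swap13 {n : ℕ} {β : Type*} [AddCommMonoid β] (f : Fin n → Fin n → Fin n → β) :
    ∑ p, ∑ q, ∑ r, f p q r = ∑ p, ∑ q, ∑ r, f r q p := by
  calc ∑ p, ∑ q, ∑ r, f p q r
      = ∑ p, ∑ r, ∑ q, f p q r := Finset.sum_congr rfl fun _ _ => Finset.sum_comm
    _ = ∑ r, ∑ p, ∑ q, f p q r := Finset.sum_comm
    _ = ∑ r, ∑ q, ∑ p, f p q r := Finset.sum_congr rfl fun _ _ => Finset.sum_comm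

section main4
variable (k : Type*) [CommRing k]
    (A : Type*) [Ring A] [Algebra k A]
    (B : Type*) [CommRing B] [Algebra k B]
    (M : Type*) [AddCommGroup M] [Module k M]
    [Module A M] [Module Aᵐᵒᵖ M] [SMulCommClass A Aᵐᵒᵖ M]
    [IsScalarTower k A M] [IsScalarTower k Aᵐᵒᵖ M]
    {n : ℕ} (i0 : Fin n)

local notation "MM" => Matrix (Fin n) (Fin n) M
local notation "MA" => Matrix (Fin n) (Fin n) A

lemma mul_scalar_apply (X : MA) (c : A) (i j : Fin n) :
    (X * Matrix.scalar (Fin n) c) i j = X i j * c := by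
  have h : Matrix.scalar (Fin n) c = Matrix.diagonal (fun _ => c) := rfl
  rw [h, Matrix.mul_diagonal]

set_option maxHeartbeats 2000000 in
lemma p2_tau2 (ε : B →ₐ[k] A)
    (p2 : M ⊗[k] A ⊗[k] A ⊗[k] B →ₗ[k] M ⊗[k] A)
    (hp2 : ∀ (m : M) (a b : A) (α : B),
      p2 (m ⊗ₜ[k] a ⊗ₜ[k] b ⊗ₜ[k] α) =
        (op (a * ε α) • m) ⊗ₜ[k] b - m ⊗ₜ[k] (a * ε α * b) + ((b * ε α) • m) ⊗ₜ[k] a)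
    (q2 : MM ⊗[k] MA ⊗[k] MA ⊗[k] B →ₗ[k] MM ⊗[k] MA)
    (hq2 : ∀ (N : MM) (X Y : MA) (α : B),
      q2 (N ⊗ₜ[k] X ⊗ₜ[k] Y ⊗ₜ[k] α) =
        (Matrix.of fun i j =>
            ∑ l, op ((X * Matrix.scalar (Fin n) (ε α)) l j) • N i l) ⊗ₜ[k] Y
        - N ⊗ₜ[k] (X * Matrix.scalar (Fin n) (ε α) * Y)
        + (Matrix.of fun i j =>
            ∑ l, (Y * Matrix.scalar (Fin n) (ε α)) i l • N l j) ⊗ₜ[k] X) :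
    p2.comp (tau2 k A B M) = (tau1 k A M).comp q2 := by
  ext N X Y α
  have hXSY : ∀ i j : Fin n, (X * Matrix.scalar (Fin n) (ε α) * Y) i j
      = ∑ r, X i r * ε α * Y r j := by
    intro i j
    rw [Matrix.mul_apply]
    exact Finset.sum_congr rfl fun r _ => by rw [mul_scalar_apply]
  simp only [TensorProduct.AlgebraTensorModule.curry_apply, TensorProduct.curry_apply,
    LinearMap.coe_restrictScalars, LinearMap.comp_apply]
  rw [hq2]
  unfold tau2
  simp only [LinearMap.sum_apply, TensorProduct.map_tmul, entryL_apply, LinearMap.id_coe,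
    id_eq, map_sum, hp2, map_sub, map_add, tau1_tmul, Matrix.of_apply, mul_scalar_apply,
    hXSY, TensorProduct.sum_tmul, TensorProduct.tmul_sum,
    Finset.sum_add_distrib, Finset.sum_sub_distrib]
  congr 1
  · congr 1
    exact sum3_swap23 _
  · exact (sum3_swap13 fun p q r => ((Y r p * ε α) • N p q) ⊗ₜ[k] X q r)

end main4
end SH5

namespace SH5
section main5
variable (k : Type*) [CommRing k]
    (A : Type*) [Ring A] [Algebra k A]
    (B : Type*) [CommRing B] [Algebra k B]
    (M : Type*) [AddCommGroup M] [Module k M]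
    [Module A M] [Module Aᵐᵒᵖ M] [SMulCommClass A Aᵐᵒᵖ M]
    [IsScalarTower k A M] [IsScalarTower k Aᵐᵒᵖ M]
    {n : ℕ} (i0 : Fin n)

local notation "MM" => Matrix (Fin n) (Fin n) M
local notation "MA" => Matrix (Fin n) (Fin n) A

noncomputable def Gmap : MM →ₗ[k] MM ⊗[k] MA :=
  ∑ j, (TensorProduct.mk k MM MA).flip (Matrix.single i0 j (1:A)) ∘ₗ colL k M i0 j

noncomputable def Ha (j : Fin n) :
    MM ⊗[k] MA →ₗ[k] MM ⊗[k] MA ⊗[k] MA ⊗[k] B :=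
  (TensorProduct.mk k (MM ⊗[k] MA ⊗[k] MA) B).flip 1 ∘ₗ
    TensorProduct.map ((TensorProduct.mk k MM MA).flip (Matrix.single i0 j (1:A)) ∘ₗ
      colL k M i0 j) LinearMap.id

noncomputable def Hb (j l : Fin n) :
    MM ⊗[k] MA →ₗ[k] MM ⊗[k] MA ⊗[k] MA ⊗[k] B :=
  (TensorProduct.mk k (MM ⊗[k] MA ⊗[k] MA) B).flip 1 ∘ₗ
    (TensorProduct.mk k (MM ⊗[k] MA) MA).flip (Matrix.single i0 l (1:A)) ∘ₗ
    TensorProduct.map (colL k M i0 j) ((stdL k A i0 i0) ∘ₗ (entryL k A j l))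

noncomputable def Hmap : MM ⊗[k] MA →ₗ[k] MM ⊗[k] MA ⊗[k] MA ⊗[k] B :=
  (∑ j : Fin n, Ha k A B M i0 j) - (∑ j : Fin n, ∑ l : Fin n, Hb k A B M i0 j l)

set_option maxHeartbeats 2000000 in
lemma homotopy (ε : B →ₐ[k] A)
    (q1 : MM ⊗[k] MA →ₗ[k] MM)
    (hq1 : ∀ (N : MM) (X : MA),
      q1 (N ⊗ₜ[k] X) =
        (Matrix.of fun i j => ∑ l, op (X l j) • N i l)
        - Matrix.of fun i j => ∑ l, X i l • N l j)
    (q2 : MM ⊗[k] MA ⊗[k] MA ⊗[k] B →ₗ[k] MM ⊗[k] MA)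
    (hq2 : ∀ (N : MM) (X Y : MA) (α : B),
      q2 (N ⊗ₜ[k] X ⊗ₜ[k] Y ⊗ₜ[k] α) =
        (Matrix.of fun i j =>
            ∑ l, op ((X * Matrix.scalar (Fin n) (ε α)) l j) • N i l) ⊗ₜ[k] Y
        - N ⊗ₜ[k] (X * Matrix.scalar (Fin n) (ε α) * Y)
        + (Matrix.of fun i j =>
            ∑ l, (Y * Matrix.scalar (Fin n) (ε α)) i l • N l j) ⊗ₜ[k] X) :
    q2.comp (Hmap k A B M i0) + (Gmap k A M i0).comp q1
      = LinearMap.id - (iota1 k A M i0).comp (tau1 k A M) := by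
  have hsc1 : Matrix.scalar (Fin n) (ε (1:B)) = 1 := by simp
  apply TensorProduct.ext'
  intro N X
  simp only [LinearMap.add_apply, LinearMap.sub_apply, LinearMap.comp_apply, LinearMap.id_apply]
  unfold Hmap Ha Hb Gmap
  simp only [LinearMap.sub_apply, LinearMap.sum_apply, TensorProduct.map_tmul,
    LinearMap.comp_apply, TensorProduct.mk_apply, LinearMap.flip_apply,
    entryL_apply, stdL_apply, map_sum, map_sub, hq1, hq2, hsc1, mul_one,
    Matrix.single_mul_single_same, TensorProduct.sub_tmul, LinearMap.id_coe, id_eq]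
  simp only [Finset.sum_add_distrib, Finset.sum_sub_distrib]
  have hA1 : (∑ x : Fin n, (Matrix.of fun i j =>
        ∑ s, op ((Matrix.single i0 x (1:A)) s j) • colL k M i0 x N i s) ⊗ₜ[k] X)
      = N ⊗ₜ[k] X := by
    rw [← TensorProduct.sum_tmul]
    congr 1
    ext i m
    rw [Matrix.sum_apply]
    have e : ∀ x : Fin n, (Matrix.of fun i j =>
        ∑ s, op ((Matrix.single i0 x (1:A)) s j) • colL k M i0 x N i s) i m
        = if x = m then N i x else 0 := by
      intro x
      simp only [Matrix.of_apply]
      rw [Finset.sum_eq_single i0]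
      · by_cases hx : x = m <;> simp [hx, Matrix.single]
      · intro s _ hs
        simp [colL_apply, hs]
      · simp
    simp only [e]
    simp
  have hA3 : (∑ x : Fin n, (Matrix.of fun i j =>
        ∑ s, X i s • colL k M i0 x N s j) ⊗ₜ[k] Matrix.single i0 x (1:A))
      = ∑ x : Fin n, colL k M i0 x (Matrix.of fun i j => ∑ l, X i l • N l j)
          ⊗ₜ[k] Matrix.single i0 x (1:A) := by
    refine Finset.sum_congr rfl fun x _ => ?_
    congr 1
    ext i m
    simp only [Matrix.of_apply, colL_apply]
    by_cases hm : m = i0 <;> simp [hm]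
  have hB1 : (∑ x : Fin n, ∑ y : Fin n, (Matrix.of fun i j =>
        ∑ s, op ((Matrix.single i0 i0 (X x y)) s j) • colL k M i0 x N i s)
          ⊗ₜ[k] Matrix.single i0 y (1:A))
      = ∑ x : Fin n, colL k M i0 x (Matrix.of fun i j => ∑ l, op (X l j) • N i l)
          ⊗ₜ[k] Matrix.single i0 x (1:A) := by
    rw [Finset.sum_comm]
    refine Finset.sum_congr rfl fun y _ => ?_
    rw [← TensorProduct.sum_tmul]
    congr 1
    ext i m
    rw [Matrix.sum_apply]
    have e : ∀ x : Fin n, (Matrix.of fun i j =>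
        ∑ s, op ((Matrix.single i0 i0 (X x y)) s j) • colL k M i0 x N i s) i m
        = if i0 = m then op (X x y) • N i x else 0 := by
      intro x
      simp only [Matrix.of_apply]
      rw [Finset.sum_eq_single i0]
      · by_cases hm : i0 = m <;> simp [hm, Matrix.single]
      · intro s _ hs
        simp [colL_apply, hs]
      · simp
    simp only [e, colL_apply, Matrix.of_apply]
    by_cases hm : m = i0
    · simp [hm]
    · have hm' : ¬ (i0 = m) := fun h => hm h.symm
      simp [hm, hm']
  have hB2 : (∑ x : Fin n, ∑ y : Fin n,
        colL k M i0 x N ⊗ₜ[k] Matrix.single i0 y (X x y))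
      = ∑ x : Fin n, colL k M i0 x N ⊗ₜ[k] (Matrix.single i0 x (1:A) * X) := by
    refine Finset.sum_congr rfl fun x _ => ?_
    rw [← TensorProduct.tmul_sum]
    congr 1
    ext i m
    rw [Matrix.sum_apply, Matrix.mul_apply]
    by_cases hi : i0 = i
    · simp [Matrix.single, hi]
    · simp [Matrix.single, hi]
  have hB3 : (∑ x : Fin n, ∑ y : Fin n, (Matrix.of fun i j =>
        ∑ s, (Matrix.single i0 y (1:A)) i s • colL k M i0 x N s j)
          ⊗ₜ[k] Matrix.single i0 i0 (X x y))
      = iota1 k A M i0 (tau1 k A M (N ⊗ₜ[k] X)) := by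
    rw [tau1_tmul, map_sum]
    rw [Finset.sum_comm]
    refine Finset.sum_congr rfl fun y _ => ?_
    rw [map_sum]
    refine Finset.sum_congr rfl fun x _ => ?_
    rw [iota1_tmul]
    congr 1
    ext i m
    simp only [Matrix.of_apply]
    rw [Finset.sum_eq_single y]
    · by_cases hi : i0 = i
      · subst hi
        by_cases hm : m = i0
        · subst hm; simp [Matrix.single]
        · have h2 : ¬(i0 = m) := fun h => hm h.symm
          simp [Matrix.single, hm, h2]
      · simp [Matrix.single, hi]
    · intro s _ hs
      have h' : ¬ (i0 = i ∧ y = s) := fun h => hs h.2.symm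
      simp [Matrix.single, h']
    · simp
  rw [hA1, hA3, hB1, hB2, hB3]
  abel

end main5
end SH5

set_option maxHeartbeats 1000000


theorem secondaryHochschild_H1_matrix_invariance
    (k : Type*) [CommRing k]
    (A : Type*) [Ring A] [Algebra k A]
    (B : Type*) [CommRing B] [Algebra k B]
    (ε : B →ₐ[k] A) (hcen : ∀ (b : B) (a : A), ε b * a = a * ε b)
    (M : Type*) [AddCommGroup M] [Module k M]
    [Module A M] [Module Aᵐᵒᵖ M] [SMulCommClass A Aᵐᵒᵖ M]
    [IsScalarTower k A M] [IsScalarTower k Aᵐᵒᵖ M]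
    (hsymm : ∀ (b : B) (m : M), ε b • m = op (ε b) • m)
    (n : ℕ) (hn : 1 ≤ n)
    -- the secondary Hochschild differentials ∂₁, ∂₂ of (A,B,ε) with coefficients in M
    (p1 : M ⊗[k] A →ₗ[k] M)
    (hp1 : ∀ (m : M) (a : A), p1 (m ⊗ₜ[k] a) = op a • m - a • m)
    (p2 : M ⊗[k] A ⊗[k] A ⊗[k] B →ₗ[k] M ⊗[k] A)
    (hp2 : ∀ (m : M) (a b : A) (α : B),
      p2 (m ⊗ₜ[k] a ⊗ₜ[k] b ⊗ₜ[k] α) =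
        (op (a * ε α) • m) ⊗ₜ[k] b - m ⊗ₜ[k] (a * ε α * b) + ((b * ε α) • m) ⊗ₜ[k] a)
    -- the secondary Hochschild differentials ∂₁', ∂₂' of (Mₙ(A),B,ε_*) with
    -- coefficients in Mₙ(M); matrices act on Mₙ(M) by matrix multiplication
    (q1 : (Matrix (Fin n) (Fin n) M) ⊗[k] (Matrix (Fin n) (Fin n) A)
        →ₗ[k] Matrix (Fin n) (Fin n) M)
    (hq1 : ∀ (N : Matrix (Fin n) (Fin n) M) (X : Matrix (Fin n) (Fin n) A),
      q1 (N ⊗ₜ[k] X) =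
        (Matrix.of fun i j => ∑ l, op (X l j) • N i l)
        - Matrix.of fun i j => ∑ l, X i l • N l j)
    (q2 : (Matrix (Fin n) (Fin n) M) ⊗[k] (Matrix (Fin n) (Fin n) A)
            ⊗[k] (Matrix (Fin n) (Fin n) A) ⊗[k] B
        →ₗ[k] (Matrix (Fin n) (Fin n) M) ⊗[k] (Matrix (Fin n) (Fin n) A))
    (hq2 : ∀ (N : Matrix (Fin n) (Fin n) M) (X Y : Matrix (Fin n) (Fin n) A) (α : B),
      q2 (N ⊗ₜ[k] X ⊗ₜ[k] Y ⊗ₜ[k] α) =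
        (Matrix.of fun i j =>
            ∑ l, op ((X * Matrix.scalar (Fin n) (ε α)) l j) • N i l) ⊗ₜ[k] Y
        - N ⊗ₜ[k] (X * Matrix.scalar (Fin n) (ε α) * Y)
        + (Matrix.of fun i j =>
            ∑ l, (Y * Matrix.scalar (Fin n) (ε α)) i l • N l j) ⊗ₜ[k] X) :
    -- Mₙ(M) is B-symmetric with respect to ε_*
    (∀ (α : B) (N : Matrix (Fin n) (Fin n) M),
      (Matrix.of fun i j => ∑ l, (Matrix.scalar (Fin n) (ε α)) i l • N l j)
        = Matrix.of fun i j => ∑ l, op ((Matrix.scalar (Fin n) (ε α)) l j) • N i l) ∧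
    -- H₁((A,B,ε);M) ≅ H₁((Mₙ(A),B,ε_*);Mₙ(M)) as k-modules
    Nonempty
      ((↥(LinearMap.ker p1) ⧸ (LinearMap.range p2).comap (LinearMap.ker p1).subtype)
        ≃ₗ[k]
       (↥(LinearMap.ker q1) ⧸ (LinearMap.range q2).comap (LinearMap.ker q1).subtype)) := by
  have hsc : ∀ (c : A) (a b : Fin n), (Matrix.scalar (Fin n) c) a b = if a = b then c else 0 := by
    intro c a b; simp [Matrix.scalar_apply, Matrix.diagonal]
  constructor
  · intro α N
    ext i j
    simp only [Matrix.of_apply]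
    have hL : ∑ l, (Matrix.scalar (Fin n) (ε α)) i l • N l j = ε α • N i j := by
      rw [Finset.sum_eq_single i]
      · rw [hsc]; simp
      · intro l _ hl
        have h' : i ≠ l := fun h => hl h.symm
        rw [hsc]; simp [h']
      · simp
    have hR : ∑ l, op ((Matrix.scalar (Fin n) (ε α)) l j) • N i l = op (ε α) • N i j := by
      rw [Finset.sum_eq_single j]
      · rw [hsc]; simp
      · intro l _ hl
        rw [hsc]; simp [hl]
      · simp
    rw [hL, hR]
    exact hsymm α (N i j)
  · -- the isomorphism
    have hn' : 0 < n := hn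
    set i0 : Fin n := ⟨0, hn'⟩ with hi0
    have hq1ι := SH5.q1_iota1 k A M i0 p1 hp1 q1 hq1
    have hp1τ := SH5.p1_tau1 k A M p1 hp1 q1 hq1
    have hq2ι := SH5.q2_iota2 k A B M i0 ε p2 hp2 q2 hq2
    have hp2τ := SH5.p2_tau2 k A B M ε p2 hp2 q2 hq2
    have hhom := SH5.homotopy k A B M i0 ε q1 hq1 q2 hq2
    have hτι := SH5.tau1_iota1 k A M i0
    -- the two maps on kernels
    have hkF : ∀ c : ↥(LinearMap.ker p1),
        ((SH5.iota1 k A M i0).comp (LinearMap.ker p1).subtype) c ∈ LinearMap.ker q1 := by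
      intro c
      have h := LinearMap.congr_fun hq1ι c.1
      simp only [LinearMap.comp_apply, Submodule.coe_subtype, LinearMap.mem_ker] at h ⊢
      rw [h, LinearMap.mem_ker.mp c.2, map_zero]
    have hkT : ∀ c : ↥(LinearMap.ker q1),
        ((SH5.tau1 k A M).comp (LinearMap.ker q1).subtype) c ∈ LinearMap.ker p1 := by
      intro c
      have h := LinearMap.congr_fun hp1τ c.1
      simp only [LinearMap.comp_apply, Submodule.coe_subtype, LinearMap.mem_ker] at h ⊢
      rw [h, LinearMap.mem_ker.mp c.2, map_zero]
    set F0 : ↥(LinearMap.ker p1) →ₗ[k] ↥(LinearMap.ker q1) :=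
      LinearMap.codRestrict _ ((SH5.iota1 k A M i0).comp (LinearMap.ker p1).subtype) hkF with hF0
    set T0 : ↥(LinearMap.ker q1) →ₗ[k] ↥(LinearMap.ker p1) :=
      LinearMap.codRestrict _ ((SH5.tau1 k A M).comp (LinearMap.ker q1).subtype) hkT with hT0
    have hleF : (LinearMap.range p2).comap (LinearMap.ker p1).subtype ≤
        Submodule.comap F0 ((LinearMap.range q2).comap (LinearMap.ker q1).subtype) := by
      rintro x hx
      simp only [Submodule.mem_comap, LinearMap.mem_range, Submodule.coe_subtype] at hx ⊢
      obtain ⟨y, hy⟩ := hx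
      refine ⟨SH5.iota2 k A B M i0 y, ?_⟩
      have h := LinearMap.congr_fun hq2ι y
      simp only [LinearMap.comp_apply] at h
      rw [h, hy]
      rfl
    have hleT : (LinearMap.range q2).comap (LinearMap.ker q1).subtype ≤
        Submodule.comap T0 ((LinearMap.range p2).comap (LinearMap.ker p1).subtype) := by
      rintro x hx
      simp only [Submodule.mem_comap, LinearMap.mem_range, Submodule.coe_subtype] at hx ⊢
      obtain ⟨y, hy⟩ := hx
      refine ⟨SH5.tau2 k A B M y, ?_⟩
      have h := LinearMap.congr_fun hp2τ y
      simp only [LinearMap.comp_apply] at h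
      rw [h, hy]
      rfl
    set Fq := Submodule.mapQ _ _ F0 hleF with hFq
    set Tq := Submodule.mapQ _ _ T0 hleT with hTq
    refine ⟨LinearEquiv.ofLinear Fq Tq ?_ ?_⟩
    · -- Fq ∘ Tq = id on the matrix-side quotient
      refine Submodule.linearMap_qext _ (LinearMap.ext fun x => ?_)
      simp only [LinearMap.comp_apply, Submodule.mkQ_apply, LinearMap.id_apply]
      rw [hFq, hTq, Submodule.mapQ_apply, Submodule.mapQ_apply]
      rw [Submodule.Quotient.eq]
      simp only [Submodule.mem_comap, LinearMap.mem_range, Submodule.coe_subtype]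
      have h := LinearMap.congr_fun hhom x.1
      simp only [LinearMap.add_apply, LinearMap.comp_apply, LinearMap.sub_apply,
        LinearMap.id_apply] at h
      rw [LinearMap.mem_ker.mp x.2, map_zero, add_zero] at h
      refine ⟨-(SH5.Hmap k A B M i0 x.1), ?_⟩
      rw [map_neg, h]
      have : (↑(F0 (T0 x) - x) : Matrix (Fin n) (Fin n) M ⊗[k] Matrix (Fin n) (Fin n) A)
          = SH5.iota1 k A M i0 (SH5.tau1 k A M x.1) - x.1 := rfl
      rw [this]
      abel
    · -- Tq ∘ Fq = id on the A-side quotient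
      refine Submodule.linearMap_qext _ (LinearMap.ext fun x => ?_)
      simp only [LinearMap.comp_apply, Submodule.mkQ_apply, LinearMap.id_apply]
      rw [hFq, hTq, Submodule.mapQ_apply, Submodule.mapQ_apply]
      congr 1
      apply Subtype.ext
      have h := LinearMap.congr_fun hτι x.1
      simp only [LinearMap.comp_apply, LinearMap.id_apply] at h
      exact h
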